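/- Let n ≥ 1 and let p, a_1, a_2, t be nonzero complex numbers with |p| < 1, generic so that all theta denominators appearing in the fundamental invariants are nonzero. For every 0 ≤ r ≤ n, every z ∈ (ℂ*)^n and every 1 ≤ i ≤ n, the fundamental invariant satisfies the quasi-periodicity E_r(a_1, a_2; z_1, …, p z_i, …, z_n) = E_r(a_1, a_2; z_1, …, z_n)/(p z_i^2). -/

import Mathlib

open Finset

/-- The theta function `θ(z;p) = ∏_{i≥0} (1 - p^i z)(1 - p^{i+1}/z)`. -/
noncomputable def theta (p z : ℂ) : ℂ :=
  ∏' i : ℕ, ((1 - p ^ i * z) * (1 - p ^ (i + 1) * z⁻¹))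

/-- The theta shifted factorial `θ(z;p;q)_k = ∏_{j=0}^{k-1} θ(q^j z;p)`. -/
noncomputable def thetaPoch (p q z : ℂ) (k : ℕ) : ℂ :=
  ∏ j ∈ Finset.range k, theta p (q ^ j * z)

/-- `θ(x u^{±1};p) = θ(xu;p) θ(x/u;p)`. -/
noncomputable def thetaPm (p x u : ℂ) : ℂ :=
  theta p (x * u) * theta p (x * u⁻¹)

/-- The fundamental `BC_n` invariant `E_r(a₁,a₂;z)`, as a sum over the subsets
`S = {i_1 < … < i_r}` of `{0,…,n-1}` (0-based indexing); for `i ∈ S`,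
`(S.filter (· < i)).card` is the (0-based) rank of `i` in `S`. -/
noncomputable def Efun (p t a₁ a₂ : ℂ) {n : ℕ} (r : ℕ) (z : Fin n → ℂ) : ℂ :=
  ∑ S ∈ Finset.powersetCard r (Finset.univ : Finset (Fin n)),
    (∏ i ∈ S,
        thetaPm p (a₂ * t ^ ((i : ℕ) - (S.filter (fun j => j < i)).card)) (z i) /
          thetaPm p (a₂ * t ^ ((i : ℕ) - (S.filter (fun j => j < i)).card))
            (a₁ * t ^ (S.filter (fun j => j < i)).card)) *
    (∏ i ∈ Sᶜ,
        thetaPm p (a₁ * t ^ ((i : ℕ) - (Sᶜ.filter (fun j => j < i)).card)) (z i) /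
          thetaPm p (a₁ * t ^ ((i : ℕ) - (Sᶜ.filter (fun j => j < i)).card))
            (a₂ * t ^ (Sᶜ.filter (fun j => j < i)).card))

/-- Genericity: all theta denominators appearing in the fundamental invariants are nonzero. -/
def eDenomsNZ (p t a₁ a₂ : ℂ) (n : ℕ) : Prop :=
  ∀ k l : ℕ, k < n → l < n →
    thetaPm p (a₂ * t ^ k) (a₁ * t ^ l) ≠ 0 ∧ thetaPm p (a₁ * t ^ k) (a₂ * t ^ l) ≠ 0

/-- The reference point `ζ^{(s)} = (a₁, a₁t, …, a₁ t^{s-1}, a₂, a₂ t, …, a₂ t^{n-s-1})`. -/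
noncomputable def zetaPt (a₁ a₂ t : ℂ) (n s : ℕ) : Fin n → ℂ :=
  fun i => if (i : ℕ) < s then a₁ * t ^ (i : ℕ) else a₂ * t ^ ((i : ℕ) - s)

/-- `F_i^+(z)`. -/
noncomputable def Fplus (p t : ℂ) (a : Fin 6 → ℂ) {n : ℕ} (i : Fin n) (z : Fin n → ℂ) : ℂ :=
  ((∏ m : Fin 6, theta p (a m * z i)) / ((z i) ^ 2 * theta p ((z i) ^ 2))) *
    ∏ j ∈ Finset.univ.erase i, thetaPm p (t * z i) (z j) / thetaPm p (z i) (z j)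

/-- `F_i^-(z) = F_i^+(z_1, …, z_i⁻¹, …, z_n)`. -/
noncomputable def Fminus (p t : ℂ) (a : Fin 6 → ℂ) {n : ℕ} (i : Fin n) (z : Fin n → ℂ) : ℂ :=
  Fplus p t a i (Function.update z i (z i)⁻¹)

/-- None of the theta denominators of `F_i^+` vanishes at `z`. -/
def FplusDenomNZ (p : ℂ) {n : ℕ} (i : Fin n) (z : Fin n → ℂ) : Prop :=
  theta p ((z i) ^ 2) ≠ 0 ∧ ∀ j, j ≠ i → thetaPm p (z i) (z j) ≠ 0

/-- None of the theta denominators of `F_i^-` vanishes at `z`. -/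
def FminusDenomNZ (p : ℂ) {n : ℕ} (i : Fin n) (z : Fin n → ℂ) : Prop :=
  FplusDenomNZ p i (Function.update z i (z i)⁻¹)

/-- `h_r(z) = Σ_i (F_i^-(z) + F_i^+(z)) E_{r-1}^{(n-1)}(z_1,…,ẑ_i,…,z_n)`, in `n+1` variables. -/
noncomputable def hFun (p t : ℂ) (a : Fin 6 → ℂ) (n r : ℕ) (z : Fin (n + 1) → ℂ) : ℂ :=
  ∑ i : Fin (n + 1),
    (Fminus p t a i z + Fplus p t a i z) *
      Efun p t (a 0) (a 1) (r - 1) (fun j : Fin n => z (i.succAbove j))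

/-- The base point `ξ = (a₁, a₁ t, …, a₁ t^{n-1})`. -/
noncomputable def xiPt (a₁ t : ℂ) (n : ℕ) : Fin n → ℂ := fun i => a₁ * t ^ (i : ℕ)

/-- The weight `W(ν) = Φ(q^ν ξ)/Φ(ξ)` of the truncated Jackson integral. -/
noncomputable def weight (p q t : ℂ) (a : Fin 6 → ℂ) (n : ℕ) (ν : Fin n → ℕ) : ℂ :=
  (∏ i : Fin n,
      (q ^ 2 * (a 0 * a 1 * a 2 * a 3 * a 4 * a 5 * t ^ (2 * n - 2))⁻¹ *
            t ^ (2 * (n - 1 - (i : ℕ)))) ^ ν i *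
        theta p (q ^ (2 * ν i) * xiPt (a 0) t n i ^ 2) / theta p (xiPt (a 0) t n i ^ 2)) *
  (∏ j : Fin n, ∏ k ∈ Finset.Ioi j,
      theta p (q ^ (ν k - ν j) * (xiPt (a 0) t n k / xiPt (a 0) t n j)) *
          theta p (q ^ (ν j + ν k) * (xiPt (a 0) t n j * xiPt (a 0) t n k)) /
        (theta p (xiPt (a 0) t n k / xiPt (a 0) t n j) *
          theta p (xiPt (a 0) t n j * xiPt (a 0) t n k))) *
  (∏ i : Fin n, ∏ m : Fin 6,
      thetaPoch p q (a m * xiPt (a 0) t n i) (ν i) /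
        thetaPoch p q (q * (a m)⁻¹ * xiPt (a 0) t n i) (ν i)) *
  (∏ j : Fin n, ∏ k ∈ Finset.Ioi j,
      thetaPoch p q (t * (xiPt (a 0) t n k / xiPt (a 0) t n j)) (ν k - ν j) *
          thetaPoch p q (t * (xiPt (a 0) t n j * xiPt (a 0) t n k)) (ν j + ν k) /
        (thetaPoch p q (q * t⁻¹ * (xiPt (a 0) t n k / xiPt (a 0) t n j)) (ν k - ν j) *
          thetaPoch p q (q * t⁻¹ * (xiPt (a 0) t n j * xiPt (a 0) t n k)) (ν j + ν k)))

/-- The truncated Jackson integral `⟨φ⟩ = Σ_{0 ≤ ν₁ ≤ … ≤ ν_n ≤ N} W(ν) φ(q^ν ξ)`. -/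
noncomputable def jackson (p q t : ℂ) (a : Fin 6 → ℂ) (n N : ℕ)
    (φ : (Fin n → ℂ) → ℂ) : ℂ :=
  ∑ ν ∈ Finset.univ.filter
      (fun ν : Fin n → Fin (N + 1) => ∀ i j : Fin n, i ≤ j → ν i ≤ ν j),
    weight p q t a n (fun i => (ν i : ℕ)) *
      φ (fun i => q ^ (ν i : ℕ) * xiPt (a 0) t n i)

/-- Genericity: all theta denominators appearing in the weight `W(ν)`,
for `0 ≤ ν₁ ≤ … ≤ ν_n ≤ N`, are nonzero. -/
def weightDenomsNZ (p q t : ℂ) (a : Fin 6 → ℂ) (n N : ℕ) : Prop :=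
  (∀ i : Fin n, theta p (xiPt (a 0) t n i ^ 2) ≠ 0) ∧
  (∀ j k : Fin n, j < k →
      theta p (xiPt (a 0) t n k / xiPt (a 0) t n j) ≠ 0 ∧
        theta p (xiPt (a 0) t n j * xiPt (a 0) t n k) ≠ 0) ∧
  (∀ (m : Fin 6) (i : Fin n) (k : ℕ), k ≤ N →
      thetaPoch p q (q * (a m)⁻¹ * xiPt (a 0) t n i) k ≠ 0) ∧
  (∀ j k : Fin n, j < k → ∀ l : ℕ, l ≤ 2 * N →
      thetaPoch p q (q * t⁻¹ * (xiPt (a 0) t n k / xiPt (a 0) t n j)) l ≠ 0 ∧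
        thetaPoch p q (q * t⁻¹ * (xiPt (a 0) t n j * xiPt (a 0) t n k)) l ≠ 0)
set_option maxHeartbeats 1000000

lemma hasProd_of_eq_zero {f : ℕ → ℂ} {i₀ : ℕ} (h : f i₀ = 0) : HasProd f 0 := by
  have hev : ∀ᶠ s : Finset ℕ in Filter.atTop, ∏ j ∈ s, f j = 0 := by
    filter_upwards [Filter.eventually_ge_atTop ({i₀} : Finset ℕ)] with s hs
    exact Finset.prod_eq_zero (hs (Finset.mem_singleton_self i₀)) h
  exact Filter.Tendsto.congr' (hev.mono fun s hs => hs.symm) tendsto_const_nhds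

lemma multipliable_aux (p c : ℂ) (hp : ‖p‖ < 1) :
    Multipliable (fun i : ℕ => 1 - p ^ i * c) := by
  by_cases h : ∃ i₀ : ℕ, 1 - p ^ i₀ * c = 0
  · obtain ⟨i₀, h⟩ := h
    exact (hasProd_of_eq_zero h).multipliable
  · push_neg at h
    have hsum : Summable (fun i : ℕ => Complex.log (1 - p ^ i * c)) := by
      have h0 : Filter.Tendsto (fun i : ℕ => ‖p‖ ^ i * ‖c‖)
          Filter.atTop (nhds 0) := by
        simpa using
          (tendsto_pow_atTop_nhds_zero_of_lt_one (norm_nonneg p) hp).mul_const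
            (‖c‖)
      have hev : ∀ᶠ i : ℕ in Filter.atTop, ‖p‖ ^ i * ‖c‖ ≤ 1 / 2 :=
        h0.eventually_le_const (by norm_num)
      have hgeo : Summable (fun i : ℕ => (3 / 2 : ℝ) * (‖p‖ ^ i * ‖c‖)) :=
        (((summable_geometric_of_lt_one (norm_nonneg p) hp).mul_right
          (‖c‖)).mul_left _)
      refine hgeo.of_norm_bounded_eventually ?_
      rw [Nat.cofinite_eq_atTop]
      filter_upwards [hev] with i hi
      have h1 : (1 : ℂ) - p ^ i * c = 1 + -(p ^ i * c) := by ring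
      rw [h1]
      have hb : ‖-(p ^ i * c)‖ ≤ 1 / 2 := by
        rw [norm_neg, norm_mul, norm_pow]; exact hi
      calc ‖Complex.log (1 + -(p ^ i * c))‖ ≤ 3 / 2 * ‖-(p ^ i * c)‖ :=
            Complex.norm_log_one_add_half_le_self hb
        _ = 3 / 2 * (‖p‖ ^ i * ‖c‖) := by
            rw [norm_neg, norm_mul, norm_pow]
    exact Complex.multipliable_of_summable_log hsum

noncomputable def thetaA (p z : ℂ) : ℂ := ∏' i : ℕ, (1 - p ^ i * z)

lemma theta_eq (p z : ℂ) (hp : ‖p‖ < 1) :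
    theta p z = thetaA p z * thetaA p (p * z⁻¹) := by
  unfold theta thetaA
  rw [← Multipliable.tprod_mul (multipliable_aux p z hp) (multipliable_aux p (p * z⁻¹) hp)]
  exact tprod_congr fun i => by ring

lemma thetaA_shift (p z : ℂ) (hp : ‖p‖ < 1) :
    thetaA p z = (1 - z) * thetaA p (p * z) := by
  unfold thetaA
  have hm : Multipliable (fun n : ℕ => 1 - p ^ (n + 1) * z) :=
    (multipliable_aux p (p * z) hp).congr fun n => by ring
  rw [tprod_eq_zero_mul' hm]
  have h1 : (1 : ℂ) - p ^ 0 * z = 1 - z := by simp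
  have h2 : ∏' (b : ℕ), (1 - p ^ (b + 1) * z) = ∏' i : ℕ, (1 - p ^ i * (p * z)) :=
    tprod_congr fun i => by ring
  rw [h1, h2]

lemma theta_p_mul (p z : ℂ) (hp : ‖p‖ < 1) (hp0 : p ≠ 0) (hz : z ≠ 0) :
    theta p (p * z) = -z⁻¹ * theta p z := by
  rw [theta_eq p (p * z) hp, theta_eq p z hp]
  have h1 : p * (p * z)⁻¹ = z⁻¹ := by field_simp
  rw [h1, thetaA_shift p z⁻¹ hp, thetaA_shift p z hp]
  have h2 : (1 : ℂ) - z⁻¹ = -z⁻¹ * (1 - z) := by field_simp; ring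
  rw [h2]; ring

lemma theta_inv_p_mul (p w : ℂ) (hp : ‖p‖ < 1) (hp0 : p ≠ 0) (hw : w ≠ 0) :
    theta p (p⁻¹ * w) = -(p⁻¹ * w) * theta p w := by
  have hz : p⁻¹ * w ≠ 0 := mul_ne_zero (inv_ne_zero hp0) hw
  have := theta_p_mul p (p⁻¹ * w) hp hp0 hz
  rw [show p * (p⁻¹ * w) = w by field_simp] at this
  rw [this]
  field_simp

lemma thetaPm_p_mul (p x u : ℂ) (hp : ‖p‖ < 1) (hp0 : p ≠ 0)
    (hx : x ≠ 0) (hu : u ≠ 0) :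
    thetaPm p x (p * u) = (p * u ^ 2)⁻¹ * thetaPm p x u := by
  unfold thetaPm
  have e1 : x * (p * u) = p * (x * u) := by ring
  have e2 : x * (p * u)⁻¹ = p⁻¹ * (x * u⁻¹) := by
    rw [mul_inv]; ring
  rw [e1, e2, theta_p_mul p (x * u) hp hp0 (mul_ne_zero hx hu),
    theta_inv_p_mul p (x * u⁻¹) hp hp0 (mul_ne_zero hx (inv_ne_zero hu))]
  field_simp

/-- quasi-periodicity of the fundamental invariants under `z_i ↦ p z_i`. -/
theorem Efun_quasi_periodicity (n : ℕ) (hn : 1 ≤ n) (r : ℕ) (hr : r ≤ n) (p t a₁ a₂ : ℂ)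
    (hp : ‖p‖ < 1) (hp0 : p ≠ 0) (ht : t ≠ 0) (ha₁ : a₁ ≠ 0) (ha₂ : a₂ ≠ 0)
    (hgen : eDenomsNZ p t a₁ a₂ n) (z : Fin n → ℂ) (hz : ∀ i, z i ≠ 0) (i : Fin n) :
    Efun p t a₁ a₂ r (Function.update z i (p * z i)) =
      Efun p t a₁ a₂ r z / (p * (z i) ^ 2) := by
  have hzi : z i ≠ 0 := hz i
  unfold Efun
  rw [Finset.sum_div]
  refine Finset.sum_congr rfl fun S _ => ?_
  by_cases hiS : i ∈ S
  · have hic : i ∉ Sᶜ := by simp [hiS]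
    have hQ : ∀ w : Fin n → ℂ, (∀ x ∈ Sᶜ, w x = z x) →
        (∏ x ∈ Sᶜ,
          thetaPm p (a₁ * t ^ ((x : ℕ) - (Sᶜ.filter (fun j => j < x)).card)) (w x) /
            thetaPm p (a₁ * t ^ ((x : ℕ) - (Sᶜ.filter (fun j => j < x)).card))
              (a₂ * t ^ (Sᶜ.filter (fun j => j < x)).card)) =
        ∏ x ∈ Sᶜ,
          thetaPm p (a₁ * t ^ ((x : ℕ) - (Sᶜ.filter (fun j => j < x)).card)) (z x) /
            thetaPm p (a₁ * t ^ ((x : ℕ) - (Sᶜ.filter (fun j => j < x)).card))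
              (a₂ * t ^ (Sᶜ.filter (fun j => j < x)).card) :=
      fun w hw => Finset.prod_congr rfl fun x hx => by rw [hw x hx]
    rw [hQ _ (fun x hx => Function.update_of_ne (ne_of_mem_of_not_mem hx hic) _ _),
      ← Finset.prod_erase_mul S _ hiS, ← Finset.prod_erase_mul S _ hiS]
    have hE : (∏ x ∈ S.erase i,
        thetaPm p (a₂ * t ^ ((x : ℕ) - (S.filter (fun j => j < x)).card))
            (Function.update z i (p * z i) x) /
          thetaPm p (a₂ * t ^ ((x : ℕ) - (S.filter (fun j => j < x)).card))
            (a₁ * t ^ (S.filter (fun j => j < x)).card)) =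
        ∏ x ∈ S.erase i,
        thetaPm p (a₂ * t ^ ((x : ℕ) - (S.filter (fun j => j < x)).card)) (z x) /
          thetaPm p (a₂ * t ^ ((x : ℕ) - (S.filter (fun j => j < x)).card))
            (a₁ * t ^ (S.filter (fun j => j < x)).card) :=
      Finset.prod_congr rfl fun x hx => by
        rw [Function.update_of_ne (Finset.ne_of_mem_erase hx) _ _]
    rw [hE, Function.update_self,
      thetaPm_p_mul p _ (z i) hp hp0 (mul_ne_zero ha₂ (pow_ne_zero _ ht)) hzi]
    ring
  · have hic : i ∈ Sᶜ := Finset.mem_compl.mpr hiS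
    have hP : (∏ x ∈ S,
        thetaPm p (a₂ * t ^ ((x : ℕ) - (S.filter (fun j => j < x)).card))
            (Function.update z i (p * z i) x) /
          thetaPm p (a₂ * t ^ ((x : ℕ) - (S.filter (fun j => j < x)).card))
            (a₁ * t ^ (S.filter (fun j => j < x)).card)) =
        ∏ x ∈ S,
        thetaPm p (a₂ * t ^ ((x : ℕ) - (S.filter (fun j => j < x)).card)) (z x) /
          thetaPm p (a₂ * t ^ ((x : ℕ) - (S.filter (fun j => j < x)).card))
            (a₁ * t ^ (S.filter (fun j => j < x)).card) :=
      Finset.prod_congr rfl fun x hx => by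
        rw [Function.update_of_ne (ne_of_mem_of_not_mem hx hiS) _ _]
    rw [hP, ← Finset.prod_erase_mul Sᶜ _ hic, ← Finset.prod_erase_mul Sᶜ _ hic]
    have hE : (∏ x ∈ Sᶜ.erase i,
        thetaPm p (a₁ * t ^ ((x : ℕ) - (Sᶜ.filter (fun j => j < x)).card))
            (Function.update z i (p * z i) x) /
          thetaPm p (a₁ * t ^ ((x : ℕ) - (Sᶜ.filter (fun j => j < x)).card))
            (a₂ * t ^ (Sᶜ.filter (fun j => j < x)).card)) =
        ∏ x ∈ Sᶜ.erase i,
        thetaPm p (a₁ * t ^ ((x : ℕ) - (Sᶜ.filter (fun j => j < x)).card)) (z x) /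
          thetaPm p (a₁ * t ^ ((x : ℕ) - (Sᶜ.filter (fun j => j < x)).card))
            (a₂ * t ^ (Sᶜ.filter (fun j => j < x)).card) :=
      Finset.prod_congr rfl fun x hx => by
        rw [Function.update_of_ne (Finset.ne_of_mem_erase hx) _ _]
    rw [hE, Function.update_self,
      thetaPm_p_mul p _ (z i) hp hp0 (mul_ne_zero ha₁ (pow_ne_zero _ ht)) hzi]
    ring
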